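/- For (λ,μ) ∈ J_{m,ℓ} and any standard tableau T on λ/μ^, the set of w ∈ Ẇ with wT standard equals Ż^{λ/μ^}_T = {w ∈ Ẇ : ⟨ζ_T, α^∨⟩ ∉ {-1,1} for all α ∈ R(w)}; equivalently Tab^{RC}(λ/μ^) = Ż^{λ/μ^}_T · T. -/

import Mathlib

/-- The periodic skew diagram `λ/μ^` attached to `(λ,μ)` (rows are indexed
`1,…,m`, with the `0`-indexed data `lam i = λ_{i+1}`, `mu i = μ_{i+1}`):
`λ/μ^ = ⋃_{k∈ℤ} (λ/μ + k(m,-ℓ))`. -/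
def hatD (m ℓ : ℕ) (lam mu : ℕ → ℤ) : Set (ℤ × ℤ) :=
  {p | ∃ (k : ℤ) (i : ℕ), i < m ∧ p.1 = (i : ℤ) + 1 + k * m ∧
        mu i + 1 ≤ p.2 + k * ℓ ∧ p.2 + k * ℓ ≤ lam i}

/-- `v ∈ P̂⁺_{m,ℓ}`: weakly decreasing with spread at most `ℓ`. -/
def isDom (m ℓ : ℕ) (v : ℕ → ℤ) : Prop :=
  (∀ i j : ℕ, i ≤ j → j < m → v j ≤ v i) ∧ v 0 - v (m - 1) ≤ (ℓ : ℤ)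

/-- `(λ,μ) ∈ 𝒥_{m,ℓ}`. -/
def memJ (n m ℓ : ℕ) (lam mu : ℕ → ℤ) : Prop :=
  1 ≤ m ∧ isDom m ℓ lam ∧ isDom m ℓ mu ∧ (∀ i < m, mu i ≤ lam i) ∧
    (∑ i ∈ Finset.range m, (lam i - mu i)) = (n : ℤ)

/-- `(λ,μ) ∈ 𝒥*_{m,ℓ}` (no empty rows: `λ_i > μ_i`). -/
def memJstar (n m ℓ : ℕ) (lam mu : ℕ → ℤ) : Prop :=
  1 ≤ m ∧ isDom m ℓ lam ∧ isDom m ℓ mu ∧ (∀ i < m, mu i < lam i) ∧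
    (∑ i ∈ Finset.range m, (lam i - mu i)) = (n : ℤ)

/-- A tableau on the (`(m,-ℓ)`-periodic) diagram `Λ`: a bijection `Λ → ℤ`
with `T(u + (m,-ℓ)) = T(u) + n`. -/
def IsTab (n m ℓ : ℕ) (Λ : Set (ℤ × ℤ)) (T : ℤ × ℤ → ℤ) : Prop :=
  Set.BijOn T Λ Set.univ ∧ ∀ u ∈ Λ, T (u + ((m : ℤ), -(ℓ : ℤ))) = T u + (n : ℤ)

/-- Row increasing. -/
def RowInc (Λ : Set (ℤ × ℤ)) (T : ℤ × ℤ → ℤ) : Prop :=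
  ∀ a b : ℤ, (a, b) ∈ Λ → (a, b + 1) ∈ Λ → T (a, b) < T (a, b + 1)

/-- Column increasing. -/
def ColInc (Λ : Set (ℤ × ℤ)) (T : ℤ × ℤ → ℤ) : Prop :=
  ∀ a b : ℤ, (a, b) ∈ Λ → (a + 1, b) ∈ Λ → T (a, b) < T (a + 1, b)

/-- A standard (row-column increasing) tableau. -/
def IsStdTab (n m ℓ : ℕ) (Λ : Set (ℤ × ℤ)) (T : ℤ × ℤ → ℤ) : Prop :=
  IsTab n m ℓ Λ T ∧ RowInc Λ T ∧ ColInc Λ T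

/-- `F` is the content function of the tableau `T`: `F(T(a,b)) = b - a`. -/
def IsContent (Λ : Set (ℤ × ℤ)) (T : ℤ × ℤ → ℤ) (F : ℤ → ℤ) : Prop :=
  ∀ u ∈ Λ, F (T u) = u.2 - u.1

/-- The periodic extension of the row-bound data `f` to all rows `a : ℤ`. -/
def exth (m ℓ : ℕ) (f : ℕ → ℤ) (a : ℤ) : ℤ :=
  f ((a - 1) % m).toNat - ((a - 1) / m) * ℓ

lemma decompAux {m : ℕ} (hm : 1 ≤ m) {a : ℤ} {i : ℕ} {k : ℤ}
    (h2 : i < m) (h3 : a - 1 = i + k * m) :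
    ((a - 1) % m).toNat = i ∧ (a - 1) / m = k := by
  have h0 : (0:ℤ) ≤ i := Int.ofNat_nonneg i
  have h2' : (i:ℤ) < m := by exact_mod_cast h2
  constructor
  · rw [h3, Int.add_mul_emod_self_right, Int.emod_eq_of_lt h0 h2']; simp
  · rw [h3, Int.add_mul_ediv_right _ _ (by positivity : (m:ℤ) ≠ 0),
      Int.ediv_eq_zero_of_lt h0 h2', zero_add]

lemma exth_eq {m : ℕ} (ℓ : ℕ) (f : ℕ → ℤ) (hm : 1 ≤ m) {a : ℤ} {i : ℕ} {k : ℤ}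
    (h2 : i < m) (h3 : a - 1 = i + k * m) : exth m ℓ f a = f i - k * ℓ := by
  obtain ⟨e1, e2⟩ := decompAux hm h2 h3
  rw [exth, e1, e2]

lemma exists_decomp {m : ℕ} (ℓ : ℕ) (hm : 1 ≤ m) (a : ℤ) :
    ∃ (i : ℕ) (k : ℤ), i < m ∧ a - 1 = i + k * m ∧
      ∀ f : ℕ → ℤ, exth m ℓ f a = f i - k * ℓ := by
  refine ⟨((a - 1) % m).toNat, (a - 1) / m, ?_, ?_, fun f => rfl⟩
  · have hlt : (a - 1) % m < m := Int.emod_lt_of_pos _ (by positivity)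
    have hnn : 0 ≤ (a - 1) % m := Int.emod_nonneg _ (by positivity)
    omega
  · have he : (m:ℤ) * ((a - 1) / m) + (a - 1) % m = a - 1 := Int.mul_ediv_add_emod _ _
    have hnn : 0 ≤ (a - 1) % m := Int.emod_nonneg _ (by positivity)
    have : (((a - 1) % m).toNat : ℤ) = (a - 1) % m := Int.toNat_of_nonneg hnn
    linarith

lemma mem_hatD_iff {m ℓ : ℕ} {lam mu : ℕ → ℤ} (hm : 1 ≤ m) (p : ℤ × ℤ) :
    p ∈ hatD m ℓ lam mu ↔ exth m ℓ mu p.1 + 1 ≤ p.2 ∧ p.2 ≤ exth m ℓ lam p.1 := by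
  constructor
  · rintro ⟨k, i, hi, h1, h2, h3⟩
    have h3' : p.1 - 1 = i + k * m := by linarith
    rw [exth_eq ℓ mu hm hi h3', exth_eq ℓ lam hm hi h3']
    constructor <;> linarith
  · rintro ⟨h1, h2⟩
    obtain ⟨i, k, hi, hd, hf⟩ := exists_decomp ℓ hm p.1
    rw [hf mu] at h1; rw [hf lam] at h2
    exact ⟨k, i, hi, by linarith, by linarith, by linarith⟩

lemma exth_step {m ℓ : ℕ} {f : ℕ → ℤ} (hm : 1 ≤ m) (hdom : isDom m ℓ f) (a : ℤ) :
    exth m ℓ f (a + 1) ≤ exth m ℓ f a := by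
  obtain ⟨i, k, hi, hd, hf⟩ := exists_decomp ℓ hm a
  rw [hf f]
  by_cases hc : i + 1 < m
  · rw [exth_eq ℓ f hm hc (by push_cast; linarith)]
    have := hdom.1 i (i + 1) (by omega) hc
    linarith
  · have hieq : i = m - 1 := by omega
    have hiz : (i:ℤ) = (m:ℤ) - 1 := by omega
    rw [exth_eq ℓ f hm hm (k := k + 1) (by push_cast; linarith)]
    have h2 := hdom.2
    have : f i = f (m - 1) := by rw [hieq]
    push_cast
    linarith

lemma exth_anti {m ℓ : ℕ} {f : ℕ → ℤ} (hm : 1 ≤ m) (hdom : isDom m ℓ f)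
    {a b : ℤ} (hab : a ≤ b) : exth m ℓ f b ≤ exth m ℓ f a := by
  refine Int.le_induction (motive := fun b _ => exth m ℓ f b ≤ exth m ℓ f a) ?_ (fun c _ ih => le_trans (exth_step hm hdom c) ih) b hab
  exact le_refl _

lemma exth_shift {m ℓ : ℕ} (f : ℕ → ℤ) (hm : 1 ≤ m) (a t : ℤ) :
    exth m ℓ f (a + t * m) = exth m ℓ f a - t * ℓ := by
  obtain ⟨i, k, hi, hd, hf⟩ := exists_decomp ℓ hm a
  rw [hf f, exth_eq ℓ f hm hi (k := k + t) (by linarith [hd]; )]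
  ring

lemma mem_shift {m ℓ : ℕ} {lam mu : ℕ → ℤ} (hm : 1 ≤ m) {p : ℤ × ℤ}
    (hp : p ∈ hatD m ℓ lam mu) (t : ℤ) :
    ((p.1 + t * m, p.2 - t * ℓ) : ℤ × ℤ) ∈ hatD m ℓ lam mu := by
  rw [mem_hatD_iff hm] at hp ⊢
  dsimp only
  rw [exth_shift mu hm, exth_shift lam hm]
  constructor <;> linarith [hp.1, hp.2]

section Chains
variable {m ℓ : ℕ} {lam mu : ℕ → ℤ} {S : ℤ × ℤ → ℤ}

lemma vert_lt (hm : 1 ≤ m) (hdl : isDom m ℓ lam) (hdm : isDom m ℓ mu)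
    (hcol : ∀ a b : ℤ, (a, b) ∈ hatD m ℓ lam mu → (a + 1, b) ∈ hatD m ℓ lam mu →
      S (a, b) < S (a + 1, b))
    {a b a' : ℤ} (h1 : (a, b) ∈ hatD m ℓ lam mu) (h2 : (a', b) ∈ hatD m ℓ lam mu)
    (hlt : a < a') : S (a, b) < S (a', b) := by
  have key : ∀ (t : ℕ) (a a' : ℤ), (a, b) ∈ hatD m ℓ lam mu → (a', b) ∈ hatD m ℓ lam mu →
      a' - a = (t : ℤ) + 1 → S (a, b) < S (a', b) := by
    intro t
    induction t with
    | zero =>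
      intro a a' h1 h2 hd
      have : a' = a + 1 := by omega
      subst this
      exact hcol a b h1 h2
    | succ t ih =>
      intro a a' h1 h2 hd
      have hmid : (a' - 1, b) ∈ hatD m ℓ lam mu := by
        rw [mem_hatD_iff hm] at h1 h2 ⊢
        refine ⟨le_trans ?_ h1.1, le_trans h2.2 ?_⟩
        · have := exth_anti hm hdm (show a ≤ a' - 1 by omega)
          simpa using this
        · exact exth_anti hm hdl (show a' - 1 ≤ a' by omega)
      have hstep := hcol (a' - 1) b hmid (by simpa using h2)
      have := ih a (a' - 1) h1 hmid (by omega)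
      simpa using lt_trans this hstep
  obtain ⟨t, ht⟩ : ∃ t : ℕ, a' - a = (t : ℤ) + 1 := ⟨(a' - a - 1).toNat, by omega⟩
  exact key t a a' h1 h2 ht

lemma horiz_lt (hm : 1 ≤ m) (hdl : isDom m ℓ lam) (hdm : isDom m ℓ mu)
    (hrow : ∀ a b : ℤ, (a, b) ∈ hatD m ℓ lam mu → (a, b + 1) ∈ hatD m ℓ lam mu →
      S (a, b) < S (a, b + 1))
    {a b b' : ℤ} (h1 : (a, b) ∈ hatD m ℓ lam mu) (h2 : (a, b') ∈ hatD m ℓ lam mu)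
    (hlt : b < b') : S (a, b) < S (a, b') := by
  have key : ∀ (t : ℕ) (b b' : ℤ), (a, b) ∈ hatD m ℓ lam mu → (a, b') ∈ hatD m ℓ lam mu →
      b' - b = (t : ℤ) + 1 → S (a, b) < S (a, b') := by
    intro t
    induction t with
    | zero =>
      intro b b' h1 h2 hd
      have : b' = b + 1 := by omega
      subst this
      exact hrow a b h1 h2
    | succ t ih =>
      intro b b' h1 h2 hd
      have hmid : (a, b' - 1) ∈ hatD m ℓ lam mu := by
        rw [mem_hatD_iff hm] at h1 h2 ⊢
        exact ⟨by dsimp at h1 ⊢; omega, by dsimp at h2 ⊢; omega⟩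
      have hstep := hrow a (b' - 1) hmid (by simpa using h2)
      have := ih b (b' - 1) h1 hmid (by omega)
      have hstep' : S (a, b' - 1) < S (a, b') := by simpa using hstep
      exact lt_trans this hstep' 
  obtain ⟨t, ht⟩ : ∃ t : ℕ, b' - b = (t : ℤ) + 1 := ⟨(b' - b - 1).toNat, by omega⟩
  exact key t b b' h1 h2 ht

/-- The key comparison lemma: in a row-and-column increasing filling of the
periodic skew diagram, entries strictly increase to the (weak) southeast. -/
lemma cmp_lt (hm : 1 ≤ m) (hdl : isDom m ℓ lam) (hdm : isDom m ℓ mu)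
    (hrow : ∀ a b : ℤ, (a, b) ∈ hatD m ℓ lam mu → (a, b + 1) ∈ hatD m ℓ lam mu →
      S (a, b) < S (a, b + 1))
    (hcol : ∀ a b : ℤ, (a, b) ∈ hatD m ℓ lam mu → (a + 1, b) ∈ hatD m ℓ lam mu →
      S (a, b) < S (a + 1, b))
    {a b a' b' : ℤ} (h1 : (a, b) ∈ hatD m ℓ lam mu) (h2 : (a', b') ∈ hatD m ℓ lam mu)
    (hle1 : a ≤ a') (hle2 : b ≤ b') (hne : ¬ (a = a' ∧ b = b')) :
    S (a, b) < S (a', b') := by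
  have hmid : (a', b) ∈ hatD m ℓ lam mu := by
    rw [mem_hatD_iff hm] at h1 h2 ⊢
    refine ⟨le_trans ?_ h1.1, le_trans (le_trans hle2 h2.2) (le_refl _)⟩
    have := exth_anti hm hdm hle1
    simpa using this
  rcases eq_or_lt_of_le hle1 with he1 | hl1
  · subst he1
    rcases eq_or_lt_of_le hle2 with he2 | hl2
    · exact absurd ⟨rfl, he2⟩ hne
    · exact horiz_lt hm hdl hdm hrow h1 h2 hl2
  · rcases eq_or_lt_of_le hle2 with he2 | hl2
    · subst he2
      exact vert_lt hm hdl hdm hcol h1 h2 hl1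
    · exact lt_trans (vert_lt hm hdl hdm hcol h1 hmid hl1)
        (horiz_lt hm hdl hdm hrow hmid h2 hl2)

end Chains

lemma Tshift {n m ℓ : ℕ} {lam mu : ℕ → ℤ} {T : ℤ × ℤ → ℤ} (hm : 1 ≤ m)
    (hTab : IsTab n m ℓ (hatD m ℓ lam mu) T) :
    ∀ (t : ℤ) (u : ℤ × ℤ), u ∈ hatD m ℓ lam mu →
      T (u.1 + t * m, u.2 - t * ℓ) = T u + t * n := by
  intro t
  induction t using Int.induction_on with
  | zero => intro u hu; simp
  | succ t ih =>
    intro u hu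
    have hs := mem_shift hm hu (t : ℤ)
    have hper := hTab.2 _ hs
    have hpt : ((u.1 + (t:ℤ) * m, u.2 - (t:ℤ) * ℓ) + ((m:ℤ), -(ℓ:ℤ)))
        = ((u.1 + ((t:ℤ) + 1) * m, u.2 - ((t:ℤ) + 1) * ℓ) : ℤ × ℤ) := by
      simp only [Prod.mk_add_mk, Prod.mk.injEq]
      constructor <;> ring
    rw [hpt] at hper
    rw [hper, ih u hu]; ring
  | pred t ih =>
    intro u hu
    have hs := mem_shift hm hu (-(t:ℤ) - 1)
    have hper := hTab.2 _ hs
    have hpt : ((u.1 + (-(t:ℤ) - 1) * m, u.2 - (-(t:ℤ) - 1) * ℓ) + ((m:ℤ), -(ℓ:ℤ)))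
        = ((u.1 + (-(t:ℤ)) * m, u.2 - (-(t:ℤ)) * ℓ) : ℤ × ℤ) := by
      simp only [Prod.mk_add_mk, Prod.mk.injEq]
      constructor <;> ring
    rw [hpt] at hper
    have hih := ih u hu
    linarith

lemma wshift {n : ℕ} {w : ℤ → ℤ} (hwp : ∀ j : ℤ, w (j + (n:ℤ)) = w j + n) :
    ∀ (t : ℤ) (z : ℤ), w (z + t * n) = w z + t * n := by
  intro t
  induction t using Int.induction_on with
  | zero => simp
  | succ t ih =>
    intro z
    have h1 := hwp (z + (t:ℤ) * n)
    have h2 : z + (t:ℤ) * n + n = z + ((t:ℤ) + 1) * n := by ring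
    rw [h2] at h1
    rw [h1, ih z]; ring
  | pred t ih =>
    intro z
    have h1 := hwp (z + (-(t:ℤ) - 1) * n)
    have h2 : z + (-(t:ℤ) - 1) * n + n = z + (-(t:ℤ)) * n := by ring
    rw [h2] at h1
    have hih := ih z
    linarith

/-- for a standard tableau `T` on `λ/μ^` with content `F = C_T`
and `w` in the extended affine Weyl group, `wT` is standard iff
`w ∈ Ż^{λ/μ^}_T`, i.e. iff `⟨ζ_T, α^∨⟩ ∉ {-1,1}` for every `α ∈ R(w)`.
(Positive roots are the `α_{ij}` with `1 ≤ i ≤ n`, `i < j`, `i ≢ j (mod n)`;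
`α_{ij} ∈ R(w)` iff `w(i) > w(j)`; and `⟨ζ_T, α_{ij}^∨⟩ = C_T(i) - C_T(j)`.) -/
theorem std_iff_Z (n m ℓ : ℕ) (hn : 2 ≤ n) (lam mu : ℕ → ℤ)
    (hJ : memJ n m ℓ lam mu)
    (T : ℤ × ℤ → ℤ) (hT : IsStdTab n m ℓ (hatD m ℓ lam mu) T)
    (F : ℤ → ℤ) (hF : IsContent (hatD m ℓ lam mu) T F)
    (w : ℤ → ℤ) (hwb : Function.Bijective w)
    (hwp : ∀ j : ℤ, w (j + (n : ℤ)) = w j + (n : ℤ)) :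
    IsStdTab n m ℓ (hatD m ℓ lam mu) (fun u => w (T u)) ↔
      ∀ i j : ℤ, 1 ≤ i → i ≤ (n : ℤ) → i < j → ¬ ((j - i) % (n : ℤ) = 0) →
        w j < w i → F i - F j ≠ 1 ∧ F i - F j ≠ -1 := by
  obtain ⟨hm, hdl, hdm, hml, hsum⟩ := hJ
  obtain ⟨⟨hTbij, hTper⟩, hTrow, hTcol⟩ := hT
  have hTrow' : ∀ a b : ℤ, (a, b) ∈ hatD m ℓ lam mu → (a, b + 1) ∈ hatD m ℓ lam mu →
      T (a, b) < T (a, b + 1) := hTrow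
  have hTcol' : ∀ a b : ℤ, (a, b) ∈ hatD m ℓ lam mu → (a + 1, b) ∈ hatD m ℓ lam mu →
      T (a, b) < T (a + 1, b) := hTcol
  have hwmono := wshift hwp
  have hTs := Tshift hm ⟨hTbij, hTper⟩
  have hTinj : Set.InjOn T (hatD m ℓ lam mu) := hTbij.2.1
  have hTsurj : ∀ z : ℤ, ∃ u ∈ hatD m ℓ lam mu, T u = z := by
    intro z
    obtain ⟨u, hu, he⟩ := hTbij.2.2 (Set.mem_univ z)
    exact ⟨u, hu, he⟩
  have hwinj := hwb.1
  constructor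
  · rintro ⟨-, hSrow, hScol⟩ i j hi1 hin hij hmod hwji
    have hSrow' : ∀ a b : ℤ, (a, b) ∈ hatD m ℓ lam mu → (a, b + 1) ∈ hatD m ℓ lam mu →
        w (T (a, b)) < w (T (a, b + 1)) := hSrow
    have hScol' : ∀ a b : ℤ, (a, b) ∈ hatD m ℓ lam mu → (a + 1, b) ∈ hatD m ℓ lam mu →
        w (T (a, b)) < w (T (a + 1, b)) := hScol
    obtain ⟨u, huΛ, hu⟩ := hTsurj i
    obtain ⟨v, hvΛ, hv⟩ := hTsurj j
    obtain ⟨a, b⟩ := u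
    obtain ⟨c, d⟩ := v
    have hFi : F i = b - a := by rw [← hu]; exact hF _ huΛ
    have hFj : F j = d - c := by rw [← hv]; exact hF _ hvΛ
    have hTuv : T (a, b) < T (c, d) := by rw [hu, hv]; exact hij
    have hne : ¬ (a = c ∧ b = d) := by
      rintro ⟨rfl, rfl⟩
      rw [hu] at hv
      omega
    have hmain : ¬ (F i - F j = 1 ∨ F i - F j = -1) := by
      intro hFe
      have hwlt : w i < w j := by
        rw [hFi, hFj] at hFe
        rcases hFe with h1 | h1
        · -- content drops by one: `j` is weakly SW on the adjacent diagonal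
          rcases le_or_gt d b with hb | hb
          · rcases le_or_gt c a with hc | hc
            · exfalso
              have := cmp_lt hm hdl hdm hTrow' hTcol' hvΛ huΛ hc hb
                (by rintro ⟨rfl, rfl⟩; exact hne ⟨rfl, rfl⟩)
              linarith
            · have hc1 : c = a + 1 := by omega
              have hd1 : d = b := by omega
              rw [hc1, hd1] at hvΛ hv
              have := hScol' a b huΛ hvΛ
              rw [hu, hv] at this
              exact this
          · have ha : a ≤ c := by omega
            have := cmp_lt (S := fun u => w (T u)) hm hdl hdm hSrow' hScol' huΛ hvΛ
              ha (by omega) hne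
            rw [hu, hv] at this
            exact this
        · -- content rises by one
          rcases le_or_gt c a with hc | hc
          · rcases le_or_gt d b with hb | hb
            · exfalso
              have := cmp_lt hm hdl hdm hTrow' hTcol' hvΛ huΛ hc hb
                (by rintro ⟨rfl, rfl⟩; exact hne ⟨rfl, rfl⟩)
              linarith
            · have hc1 : c = a := by omega
              have hd1 : d = b + 1 := by omega
              rw [hc1, hd1] at hvΛ hv
              have := hSrow' a b huΛ hvΛ
              rw [hu, hv] at this
              exact this
          · have hb : b ≤ d := by omega
            have := cmp_lt (S := fun u => w (T u)) hm hdl hdm hSrow' hScol' huΛ hvΛ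
              (by omega) hb hne
            rw [hu, hv] at this
            exact this
      omega
    exact ⟨fun h => hmain (Or.inl h), fun h => hmain (Or.inr h)⟩
  · intro h
    have hnpos : (0:ℤ) < n := by positivity
    -- a common argument for both row and column steps
    have key : ∀ (a b c d : ℤ), (a, b) ∈ hatD m ℓ lam mu → (c, d) ∈ hatD m ℓ lam mu →
        T (a, b) < T (c, d) → (d - c) - (b - a) = 1 ∨ (d - c) - (b - a) = -1 →
        w (T (a, b)) < w (T (c, d)) := by
      intro a b c d h1 h2 hxy hdiag
      set x := T (a, b) with hxdef
      set y := T (c, d) with hydef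
      by_cases hdvd : ((y - x) % (n:ℤ) = 0)
      · obtain ⟨t, ht⟩ := Int.dvd_of_emod_eq_zero hdvd
        have h0 : (0:ℤ) < (n:ℤ) * t := by rw [← ht]; omega
        have ht0 : 0 < t := by
          by_contra hcon
          push_neg at hcon
          nlinarith
        have hwy : w y = w x + t * n := by
          rw [show y = x + t * (n:ℤ) by linarith]
          exact hwmono t x
        nlinarith
      · set k := -((x - 1) / (n:ℤ)) with hkdef
        have he := Int.mul_ediv_add_emod (x - 1) (n:ℤ)
        have hr0 : 0 ≤ (x - 1) % (n:ℤ) := Int.emod_nonneg _ (by positivity)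
        have hrn : (x - 1) % (n:ℤ) < n := Int.emod_lt_of_pos _ hnpos
        have hxk : x + k * n = (x - 1) % (n:ℤ) + 1 := by
          rw [hkdef]; linarith
        have hmod : ¬ ((y + k * n - (x + k * n)) % (n:ℤ) = 0) := by
          have hyx : y + k * n - (x + k * n) = y - x := by ring
          rw [hyx]; exact hdvd
        have happ := h (x + k * n) (y + k * n) (by omega) (by omega) (by omega) hmod
        have hTx : T (a + k * m, b - k * ℓ) = x + k * n := hTs k (a, b) h1
        have hTy : T (c + k * m, d - k * ℓ) = y + k * n := hTs k (c, d) h2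
        have hFx : F (x + k * n) = (b - k * ℓ) - (a + k * m) := by
          rw [← hTx]; exact hF _ (mem_shift hm h1 k)
        have hFy : F (y + k * n) = (d - k * ℓ) - (c + k * m) := by
          rw [← hTy]; exact hF _ (mem_shift hm h2 k)
        rcases lt_trichotomy (w x) (w y) with hlt | heq | hgt
        · exact hlt
        · exact absurd (hwinj heq) (by omega)
        · exfalso
          have hwji : w (y + k * n) < w (x + k * n) := by
            rw [hwmono k x, hwmono k y]
            omega
          have hcc := happ hwji
          rcases hdiag with hd1 | hd1
          · exact hcc.2 (by rw [hFx, hFy]; linarith)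
          · exact hcc.1 (by rw [hFx, hFy]; linarith)
    refine ⟨⟨⟨fun u _ => Set.mem_univ _, fun u hu v hv he => hTinj hu hv (hwinj he),
      fun z _ => ?_⟩, fun u hu => ?_⟩, ?_, ?_⟩
    · obtain ⟨x, hx⟩ := hwb.2 z
      obtain ⟨u, hu, hT'⟩ := hTsurj x
      exact ⟨u, hu, by simp [hT', hx]⟩
    · show w (T (u + ((m:ℤ), -(ℓ:ℤ)))) = w (T u) + n
      rw [hTper u hu, hwp]
    · intro a b h1 h2
      exact key a b a (b + 1) h1 h2 (hTrow a b h1 h2) (by left; ring)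
    · intro a b h1 h2
      exact key a b (a + 1) b h1 h2 (hTcol a b h1 h2) (by right; ring)
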